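/- For any graph G of order n, γ(G) = γ_R(G) if and only if G has no edges (i.e., G is the empty graph on n vertices). -/

import Mathlib

open SimpleGraph Finset

/-- A Roman dominating function: values in {0,1,2}, every 0-vertex has a neighbor with value 2. -/
def IsRDF {V : Type*} (G : SimpleGraph V) (f : V → ℕ) : Prop :=
  (∀ v, f v ≤ 2) ∧ ∀ v, f v = 0 → ∃ u, G.Adj v u ∧ f u = 2

/-- The Roman domination number: minimum weight of a Roman dominating function. -/
noncomputable def romanDom {V : Type*} [Fintype V] (G : SimpleGraph V) : ℕ :=
  sInf {k | ∃ f : V → ℕ, IsRDF G f ∧ ∑ v, f v = k}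

/-- A dominating set. -/
def IsDomSet {V : Type*} (G : SimpleGraph V) (S : Set V) : Prop :=
  ∀ v, v ∈ S ∨ ∃ u ∈ S, G.Adj u v

/-- The domination number. -/
noncomputable def domNum {V : Type*} [Fintype V] (G : SimpleGraph V) : ℕ :=
  sInf {k | ∃ S : Set V, IsDomSet G S ∧ S.ncard = k}

/-- Degree of a vertex. -/
noncomputable def deg {V : Type*} (G : SimpleGraph V) (v : V) : ℕ :=
  (G.neighborSet v).ncard

/-- Maximum degree. -/
noncomputable def maxDeg {V : Type*} (G : SimpleGraph V) : ℕ :=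
  sSup {d | ∃ v, deg G v = d}

/-- Minimum degree. -/
noncomputable def minDeg {V : Type*} (G : SimpleGraph V) : ℕ :=
  sInf {d | ∃ v, deg G v = d}

/-- The Roman bondage number: minimum size of an edge set whose deletion increases `romanDom`. -/
noncomputable def romanBondage {V : Type*} [Fintype V] (G : SimpleGraph V) : ℕ :=
  sInf {k | ∃ B : Set (Sym2 V), B ⊆ G.edgeSet ∧
    romanDom (G.deleteEdges B) > romanDom G ∧ B.ncard = k}

/-- The bondage number: minimum size of an edge set whose deletion increases `domNum`. -/
noncomputable def bondage {V : Type*} [Fintype V] (G : SimpleGraph V) : ℕ :=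
  sInf {k | ∃ B : Set (Sym2 V), B ⊆ G.edgeSet ∧
    domNum (G.deleteEdges B) > domNum G ∧ B.ncard = k}

/-- A vertex cover. -/
def IsVC {V : Type*} (G : SimpleGraph V) (S : Set V) : Prop :=
  ∀ u v, G.Adj u v → u ∈ S ∨ v ∈ S

/-- The vertex covering number. -/
noncomputable def vcNum {V : Type*} [Fintype V] (G : SimpleGraph V) : ℕ :=
  sInf {k | ∃ S : Set V, IsVC G S ∧ S.ncard = k}

section aux

variable {V : Type*} [Fintype V] {G : SimpleGraph V}

lemma domNum_le (S : Set V) (hS : IsDomSet G S) : domNum G ≤ S.ncard :=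
  Nat.sInf_le ⟨S, hS, rfl⟩

lemma support_dom {f : V → ℕ} (hf : IsRDF G f) :
    IsDomSet G {v | f v ≠ 0} := by
  intro v
  by_cases h : f v = 0
  · obtain ⟨u, hadj, hu⟩ := hf.2 v h
    exact Or.inr ⟨u, by simp [hu], hadj.symm⟩
  · exact Or.inl h

lemma domNum_bot : domNum (⊥ : SimpleGraph V) = Fintype.card V := by
  have hmem : Fintype.card V ∈ {k | ∃ S : Set V, IsDomSet (⊥ : SimpleGraph V) S ∧ S.ncard = k} :=
    ⟨Set.univ, fun v => Or.inl trivial, by rw [Set.ncard_univ, Nat.card_eq_fintype_card]⟩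
  refine le_antisymm (Nat.sInf_le hmem) (le_csInf ⟨_, hmem⟩ ?_)
  rintro k ⟨S, hS, rfl⟩
  have : S = Set.univ := by
    ext v
    rcases hS v with h | ⟨u, _, hadj⟩
    · simp [h]
    · exact absurd hadj (by simp)
  simp [this, Set.ncard_univ]

lemma romanDom_bot : romanDom (⊥ : SimpleGraph V) = Fintype.card V := by
  have hmem : Fintype.card V ∈
      {k | ∃ f : V → ℕ, IsRDF (⊥ : SimpleGraph V) f ∧ ∑ v, f v = k} :=
    ⟨fun _ => 1, ⟨fun _ => by norm_num, fun v h => by simp at h⟩, by simp⟩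
  refine le_antisymm (Nat.sInf_le hmem) (le_csInf ⟨_, hmem⟩ ?_)
  rintro k ⟨f, hf, rfl⟩
  have h1 : ∀ v, 1 ≤ f v := by
    intro v
    rcases Nat.eq_zero_or_pos (f v) with h | h
    · obtain ⟨u, hadj, _⟩ := hf.2 v h
      exact absurd hadj (by simp)
    · exact h
  calc Fintype.card V = ∑ _v : V, 1 := by simp
    _ ≤ ∑ v, f v := Finset.sum_le_sum fun v _ => h1 v

end aux

theorem stmt1 {V : Type*} [Fintype V] (G : SimpleGraph V) :
    domNum G = romanDom G ↔ G = ⊥ := by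
  classical
  constructor
  · intro heq
    by_contra hne
    obtain ⟨a, b, hab⟩ : ∃ a b, G.Adj a b := by
      by_contra h
      push_neg at h
      exact hne (by ext u v; simp [h u v])
    -- romanDom is attained
    have hne' : {k | ∃ f : V → ℕ, IsRDF G f ∧ ∑ v, f v = k}.Nonempty :=
      ⟨_, fun _ => 1, ⟨fun _ => by norm_num, fun v h => by simp at h⟩, rfl⟩
    obtain ⟨f, hf, hsum⟩ := Nat.sInf_mem hne'
    have hsum' : ∑ v, f v = romanDom G := hsum
    clear hsum
    by_cases h2 : ∃ v₀, f v₀ = 2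
    · obtain ⟨v₀, hv₀⟩ := h2
      set T : Finset V := Finset.univ.filter (fun v => f v ≠ 0) with hT
      have hv₀T : v₀ ∈ T := by simp [hT, hv₀]
      have hcard : T.card + 1 ≤ romanDom G := by
        have hle' : ∑ v ∈ T, f v ≤ romanDom G := hsum' ▸ Finset.sum_le_sum_of_subset (Finset.subset_univ T)
        have h1 : ∀ v ∈ T.erase v₀, 1 ≤ f v := by
          intro v hv
          have := (Finset.mem_filter.1 (Finset.mem_of_mem_erase hv)).2
          omega
        have hsplit : ∑ v ∈ T, f v = f v₀ + ∑ v ∈ T.erase v₀, f v :=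
          (Finset.add_sum_erase T f hv₀T).symm
        have hce : (T.erase v₀).card ≤ ∑ v ∈ T.erase v₀, f v := by
          calc (T.erase v₀).card = ∑ _v ∈ T.erase v₀, 1 := by simp
            _ ≤ _ := Finset.sum_le_sum h1
        have hec : (T.erase v₀).card = T.card - 1 := Finset.card_erase_of_mem hv₀T
        have hTpos : 1 ≤ T.card := Finset.card_pos.2 ⟨v₀, hv₀T⟩
        omega
      have hdom : IsDomSet G (↑T : Set V) := by
        have := support_dom hf
        convert this using 1
        ext v; simp [hT]
      have := domNum_le (↑T : Set V) hdom
      rw [Set.ncard_coe_finset] at this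
      omega
    · push_neg at h2
      have h1 : ∀ v, f v = 1 := by
        intro v
        have hle := hf.1 v
        rcases Nat.eq_zero_or_pos (f v) with h | h
        · obtain ⟨u, _, hu⟩ := hf.2 v h
          exact absurd hu (h2 u)
        · have := h2 v; omega
      have hkcard : romanDom G = Fintype.card V := by
        rw [← hsum']; simp [h1]
      have hdom : IsDomSet G (Set.univ \ {a}) := by
        intro v
        by_cases hv : v = a
        · subst hv
          exact Or.inr ⟨b, ⟨trivial, fun h => G.irrefl (h ▸ hab)⟩, hab.symm⟩
        · exact Or.inl ⟨trivial, hv⟩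
      have hle := domNum_le _ hdom
      have hncard : (Set.univ \ {a} : Set V).ncard = Fintype.card V - 1 := by
        rw [Set.ncard_diff (by simp)]
        simp [Set.ncard_univ]
      have hpos : 1 ≤ Fintype.card V := Fintype.card_pos_iff.2 ⟨a⟩
      rw [hncard] at hle
      omega
  · rintro rfl
    rw [domNum_bot, romanDom_bot]
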